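/- arXiv:0909.2214 — 2 statements merged into one kernel-verified Lean document; each statement's English description precedes it below -/
import Mathlib

section
/- Let R_ρ(w) = 2wρ/(√(1+4ρ²w²)+1) for ρ > 0 (R-transform of the symmetric Bernoulli measure λ_ρ = (δ_{-ρ}+δ_ρ)/2, with the principal branch). Then R_ρ maps the lower half plane ℂ⁻ into ℂ⁻ ∪ ℝ; in particular Im R_ρ(w) ≤ 0 whenever Im w < 0. -/
open Complex

lemma key_ineq (ρ u v a b : ℝ) (hρ : 0 < ρ)
    (h1 : a^2 - b^2 = 1 + 4*ρ^2*u^2 - 4*ρ^2*v^2)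
    (h2 : a*b = 4*ρ^2*u*v) : 4*ρ^2*u^2 ≤ a^2 := by
  by_contra h
  push_neg at h
  have h2sq : a^2*b^2 = 16*ρ^4*u^2*v^2 := by
    have := congrArg (·^2) h2
    linear_combination this
  have hK : 0 < 4*ρ^2*u^2 - a^2 := by linarith
  nlinarith [h1, h2sq, mul_pos hK hK,
    mul_nonneg hK.le (add_nonneg (sq_nonneg a) (sq_nonneg b)),
    mul_nonneg (mul_nonneg (by positivity : (0:ℝ) ≤ 4*ρ^2) (sq_nonneg u)) (sq_nonneg b)]

lemma re_sqrt_nonneg (c : ℂ) : 0 ≤ (c ^ ((1:ℂ)/2)).re := by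
  rcases eq_or_ne c 0 with rfl | hc
  · simp [Complex.zero_cpow (by norm_num : (1:ℂ)/2 ≠ 0)]
  · rw [Complex.cpow_def_of_ne_zero hc, Complex.exp_re]
    apply mul_nonneg (Real.exp_nonneg _)
    have him : (Complex.log c * ((1:ℂ)/2)).im = c.arg / 2 := by
      simp [Complex.log_im]; ring
    rw [him]
    apply Real.cos_nonneg_of_mem_Icc
    constructor
    · linarith [Complex.neg_pi_lt_arg c]
    · linarith [Complex.arg_le_pi c]

/-- The R-transform `R_ρ(w) = 2wρ/(√(1+4ρ²w²)+1)` of the symmetric Bernoulli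
measure `(δ_{-ρ}+δ_ρ)/2`, taken with the principal branch of the square root,
maps the lower half plane into `ℂ⁻ ∪ ℝ`: `Im R_ρ(w) ≤ 0` whenever `Im w < 0`. -/
theorem stmt_7 (ρ : ℝ) (hρ : 0 < ρ) (w : ℂ) (hw : w.im < 0) :
    (2 * w * ρ / ((1 + 4 * (ρ : ℂ) ^ 2 * w ^ 2) ^ ((1 : ℂ) / 2) + 1)).im ≤ 0 := by
  set c : ℂ := 1 + 4 * (ρ : ℂ) ^ 2 * w ^ 2 with hc
  rcases eq_or_ne c 0 with hc0 | hc0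
  · rw [hc0, Complex.zero_cpow (by norm_num : (1:ℂ)/2 ≠ 0)]
    simp [Complex.mul_im]
    nlinarith
  · set s : ℂ := c ^ ((1:ℂ)/2) with hs
    have hs2 : s ^ 2 = c := by
      rw [hs]
      have : (1:ℂ)/2 = ((2:ℕ):ℂ)⁻¹ := by norm_num
      rw [this]
      exact Complex.cpow_nat_inv_pow c two_ne_zero
    have ha : 0 ≤ s.re := re_sqrt_nonneg c
    set a := s.re; set b := s.im; set u := w.re; set v := w.im
    have hre : a^2 - b^2 = 1 + 4*ρ^2*u^2 - 4*ρ^2*v^2 := by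
      have := congrArg Complex.re hs2
      simp [pow_two, Complex.mul_re, Complex.mul_im, hc] at this
      linarith
    have him : a*b = 4*ρ^2*u*v := by
      have := congrArg Complex.im hs2
      simp [pow_two, Complex.mul_re, Complex.mul_im, hc] at this
      nlinarith [this]
    have hkey : 4*ρ^2*u^2 ≤ a^2 := key_ineq ρ u v a b hρ hre him
    have hd : (s + 1) ≠ 0 := by
      intro h
      have := congrArg Complex.re h
      simp at this
      linarith
    have hN : 0 < Complex.normSq (s + 1) := Complex.normSq_pos.2 hd
    rw [Complex.div_im, div_sub_div_same]
    apply div_nonpos_of_nonpos_of_nonneg _ hN.le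
    have hnum : v * (a + 1) ≤ u * b := by
      rcases ha.lt_or_eq with h | h
      · have himu : u * (a * b) = 4 * ρ^2 * u^2 * v := by linear_combination u * him
        nlinarith [mul_nonneg (neg_nonneg.2 hw.le) (sub_nonneg.2 hkey), h, himu]
      · have h0 : u * (4 * ρ^2 * v) = 0 := by
          have : (4:ℝ) * ρ^2 * u * v = 0 := by rw [← him, ← h]; ring
          linarith [this]
        have hu : u = 0 := by
          rcases mul_eq_zero.mp h0 with h' | h'
          · exact h'
          · nlinarith
        rw [← h, hu]
        simp
        linarith
    have h2ρ := mul_le_mul_of_nonneg_left hnum (by positivity : (0:ℝ) ≤ 2 * ρ)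
    simp only [Complex.add_re, Complex.add_im, Complex.mul_re, Complex.mul_im,
      Complex.ofReal_re, Complex.ofReal_im, Complex.one_re, Complex.one_im,
      Complex.re_ofNat, Complex.im_ofNat]
    nlinarith [h2ρ]
end

section
/- Let ν be a probability measure on ℝ whose Stieltjes transform satisfies |Im G_ν(iy)| ≤ c for all y ∈ (0,1]. Then for every ε ∈ (0, 1], ∫_{(-ε,ε)} |log|x|| dν(x) ≤ C·ε·(1 + |log ε|) for a constant C depending only on c. In particular ν({0}) = 0 and x ↦ log|x| is ν-integrable near 0. -/
open MeasureTheory Set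


lemma my_lemA (c y : ℝ) (ν : Measure ℝ) [IsProbabilityMeasure ν]
    (hy : 0 < y) (hy1 : y ≤ 1)
    (hG : |(∫ x : ℝ, (Complex.I * y - x)⁻¹ ∂ν).im| ≤ c) :
    ν (Set.Ioo (-y) y) ≤ ENNReal.ofReal (2 * c * y) := by
  set g : ℝ → ℝ := fun x => y / (x ^ 2 + y ^ 2) with hg
  have hpos : ∀ x : ℝ, 0 < x ^ 2 + y ^ 2 := fun x => by positivity
  have hcont : Continuous g := continuous_const.div (by fun_prop) fun x => (hpos x).ne'
  have hgnonneg : ∀ x, 0 ≤ g x := fun x => div_nonneg hy.le (hpos x).le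
  have hgle : ∀ x, g x ≤ 1 / y := fun x => by
    rw [div_le_div_iff₀ (hpos x) hy]
    nlinarith [sq_nonneg x]
  have hgint : Integrable g ν :=
    ⟨hcont.aestronglyMeasurable, HasFiniteIntegral.of_bounded (C := 1 / y)
      (Filter.Eventually.of_forall fun x => by
        rw [Real.norm_eq_abs, abs_of_nonneg (hgnonneg x)]; exact hgle x)⟩
  -- complex integrand
  have hzne : ∀ x : ℝ, (Complex.I * y - x : ℂ) ≠ 0 := by
    intro x h
    have := congrArg Complex.im h
    simp at this
    exact hy.ne' this
  have hfcont : Continuous fun x : ℝ => (Complex.I * y - x : ℂ)⁻¹ := by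
    apply Continuous.inv₀ (by fun_prop) hzne
  have hfint : Integrable (fun x : ℝ => (Complex.I * y - x : ℂ)⁻¹) ν := by
    refine ⟨hfcont.aestronglyMeasurable, HasFiniteIntegral.of_bounded (C := 1 / y)
      (Filter.Eventually.of_forall fun x => ?_)⟩
    rw [norm_inv, one_div]
    refine inv_anti₀ hy ?_
    calc y = |(Complex.I * y - x : ℂ).im| := by simp [abs_of_nonneg hy.le]
      _ ≤ ‖(Complex.I * y - x : ℂ)‖ := Complex.abs_im_le_norm _
  have him : ∀ x : ℝ, ((Complex.I * y - x : ℂ)⁻¹).im = -g x := by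
    intro x
    rw [Complex.inv_im]
    simp [Complex.normSq_apply, hg]
    ring
  have key : (∫ x : ℝ, (Complex.I * y - x)⁻¹ ∂ν).im = -∫ x, g x ∂ν := by
    have h := integral_im (𝕜 := ℂ) hfint
    simp only [RCLike.im_to_complex] at h
    rw [← h]
    simp_rw [him]
    exact integral_neg g
  have hint_le : ∫ x, g x ∂ν ≤ c := by
    have h0 : 0 ≤ ∫ x, g x ∂ν := integral_nonneg hgnonneg
    rw [key, abs_neg, abs_of_nonneg h0] at hG
    exact hG
  have hlow : (ν (Set.Ioo (-y) y)).toReal * (1 / (2 * y)) ≤ ∫ x, g x ∂ν := by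
    have h1 : ∫ _ in Set.Ioo (-y) y, (1 / (2 * y)) ∂ν ≤ ∫ x in Set.Ioo (-y) y, g x ∂ν := by
      refine setIntegral_mono_on (integrableOn_const (measure_ne_top _ _))
        hgint.integrableOn measurableSet_Ioo fun x hx => ?_
      rw [div_le_div_iff₀ (by positivity) (hpos x)]
      nlinarith [hx.1, hx.2]
    have h2 : ∫ x in Set.Ioo (-y) y, g x ∂ν ≤ ∫ x, g x ∂ν :=
      setIntegral_le_integral hgint (Filter.Eventually.of_forall hgnonneg)
    calc (ν (Set.Ioo (-y) y)).toReal * (1 / (2 * y))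
        = ∫ _ in Set.Ioo (-y) y, (1 / (2 * y)) ∂ν := by rw [setIntegral_const]; simp [mul_comm, Measure.real]
      _ ≤ ∫ x, g x ∂ν := h1.trans h2
  have htr : (ν (Set.Ioo (-y) y)).toReal ≤ 2 * c * y := by
    have := hlow.trans hint_le
    have h2y : 0 < 2 * y := by linarith
    have h3 := mul_le_mul_of_nonneg_right this h2y.le
    rw [mul_assoc, one_div, inv_mul_cancel₀ h2y.ne', mul_one] at h3
    linarith
  rw [← ENNReal.ofReal_toReal (measure_ne_top ν _)]
  exact ENNReal.ofReal_le_ofReal htr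


lemma my_lem0 (c : ℝ) (ν : Measure ℝ)
    (hν : ∀ y : ℝ, 0 < y → y ≤ 1 → ν (Set.Ioo (-y) y) ≤ ENNReal.ofReal (2 * c * y)) :
    ν {0} = 0 := by
  have h : ∀ n : ℕ, ν {0} ≤ ENNReal.ofReal (2 * c * (1 / (n + 1))) := by
    intro n
    have hy : (0:ℝ) < 1 / (n + 1) := by positivity
    have hy1 : (1:ℝ) / (n + 1) ≤ 1 := by
      rw [div_le_one (by positivity)]; simp
    refine le_trans (measure_mono ?_) (hν _ hy hy1)
    intro x hx
    simp only [mem_singleton_iff] at hx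
    subst hx
    exact ⟨neg_neg_iff_pos.mpr hy, hy⟩
  have htend : Filter.Tendsto (fun n : ℕ => ENNReal.ofReal (2 * c * (1 / (n + 1))))
      Filter.atTop (nhds 0) := by
    have h1 : Filter.Tendsto (fun n : ℕ => 2 * c * (1 / ((n:ℝ) + 1))) Filter.atTop (nhds 0) := by
      have := Filter.Tendsto.const_mul (2 * c) tendsto_one_div_add_atTop_nhds_zero_nat
      simpa using this
    have := ENNReal.tendsto_ofReal h1
    simpa using this
  exact le_antisymm (ge_of_tendsto' htend h) zero_le

lemma my_lemB (c : ℝ) (hc : 0 ≤ c) (ν : Measure ℝ)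
    (hν : ∀ y : ℝ, 0 < y → y ≤ 1 → ν (Set.Ioo (-y) y) ≤ ENNReal.ofReal (2 * c * y))
    {ε : ℝ} (hε : 0 < ε) (hε1 : ε ≤ 1) :
    ∫⁻ x in Set.Ioo (-ε) ε, ENNReal.ofReal |Real.log (abs x)| ∂ν
      ≤ ENNReal.ofReal (8 * c * ε * (1 + |Real.log ε|)) := by
  set L : ℝ := |Real.log ε| with hL
  have hL0 : 0 ≤ L := abs_nonneg _
  have hLeq : L = -Real.log ε := abs_of_nonpos (Real.log_nonpos hε.le hε1)
  set A : ℕ → Set ℝ := fun j => {x | ε / 2 ^ (j + 1) ≤ |x| ∧ |x| < ε / 2 ^ j} with hA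
  have hAmeas : ∀ j, MeasurableSet (A j) := by
    intro j
    have : A j = (fun x : ℝ => |x|) ⁻¹' Set.Ico (ε / 2 ^ (j + 1)) (ε / 2 ^ j) := rfl
    rw [this]
    exact measurableSet_Ico.preimage (by fun_prop)
  have hν0 : ν {0} = 0 := my_lem0 c ν hν
  -- covering
  have hcover : Set.Ioo (-ε) ε ⊆ (⋃ j, A j) ∪ {0} := by
    intro x hx
    rcases eq_or_ne x 0 with h0 | h0
    · exact Or.inr (by simp [h0])
    · left
      have hxε : |x| < ε := abs_lt.2 ⟨hx.1, hx.2⟩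
      have hx0 : 0 < |x| := abs_pos.2 h0
      have hex : ∃ n : ℕ, ε / 2 ^ (n + 1) ≤ |x| := by
        obtain ⟨n, hn⟩ := exists_pow_lt_of_lt_one (x := |x| / ε) (y := (1/2 : ℝ))
          (by positivity) (by norm_num)
        refine ⟨n, ?_⟩
        have : ε * (1/2 : ℝ) ^ n < ε * (|x| / ε) := by
          exact mul_lt_mul_of_pos_left hn hε
        rw [mul_div_cancel₀ _ hε.ne'] at this
        have h2 : ε * (1/2 : ℝ) ^ n = ε / 2 ^ n := by
          rw [div_pow, one_pow]; ring
        have h3 : ε / 2 ^ (n + 1) ≤ ε / 2 ^ n := by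
          apply div_le_div_of_nonneg_left hε.le (by positivity)
          exact pow_le_pow_right₀ (by norm_num) (Nat.le_succ n)
        linarith [h2 ▸ this]
      set m := Nat.find hex with hm
      have hm1 : ε / 2 ^ (m + 1) ≤ |x| := Nat.find_spec hex
      have hm2 : |x| < ε / 2 ^ m := by
        rcases Nat.eq_zero_or_pos m with h | h
        · rw [h]; simpa using hxε
        · obtain ⟨k, hk⟩ := Nat.exists_eq_succ_of_ne_zero h.ne'
          have hmin := Nat.find_min hex (by omega : k < Nat.find hex)
          push_neg at hmin
          rw [hk]
          exact hmin
      exact Set.mem_iUnion.2 ⟨m, hm1, hm2⟩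
  -- per-annulus bound
  have hann : ∀ j : ℕ, ∫⁻ x in A j, ENNReal.ofReal |Real.log (abs x)| ∂ν
      ≤ ENNReal.ofReal (((j : ℝ) + 1) * Real.log 2 + L) * ENNReal.ofReal (2 * c * (ε / 2 ^ j)) := by
    intro j
    have h2j : (0:ℝ) < 2 ^ j := by positivity
    have hyj : (0:ℝ) < ε / 2 ^ j := by positivity
    have h1j : (1:ℝ) ≤ 2 ^ j := by
      have := Nat.one_le_two_pow (n := j)
      exact_mod_cast Nat.cast_le.2 this |>.trans_eq (by push_cast; ring)
    have hyj1 : ε / 2 ^ j ≤ 1 := (div_le_one h2j).2 (hε1.trans h1j)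
    have hb : ∀ x ∈ A j, ENNReal.ofReal |Real.log (abs x)|
        ≤ ENNReal.ofReal (((j : ℝ) + 1) * Real.log 2 + L) := by
      intro x hx
      apply ENNReal.ofReal_le_ofReal
      obtain ⟨h1, h2⟩ := hx
      have hx0 : 0 < |x| := lt_of_lt_of_le (by positivity) h1
      have hx1 : |x| ≤ 1 := le_trans h2.le hyj1
      rw [abs_of_nonpos (Real.log_nonpos hx0.le hx1)]
      have hlog : Real.log (ε / 2 ^ (j + 1)) ≤ Real.log |x| :=
        Real.log_le_log (by positivity) h1
      rw [Real.log_div hε.ne' (by positivity : (0:ℝ) < 2 ^ (j+1)).ne', Real.log_pow] at hlog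
      push_cast at hlog
      rw [hLeq]
      linarith
    calc ∫⁻ x in A j, ENNReal.ofReal |Real.log (abs x)| ∂ν
        ≤ ∫⁻ _ in A j, ENNReal.ofReal (((j : ℝ) + 1) * Real.log 2 + L) ∂ν :=
          setLIntegral_mono' (hAmeas j) hb
      _ = ENNReal.ofReal (((j : ℝ) + 1) * Real.log 2 + L) * ν (A j) :=
          setLIntegral_const _ _
      _ ≤ _ := by
          refine mul_le_mul_right ?_ _
          refine le_trans (measure_mono fun x hx => ?_) (hν _ hyj hyj1)
          exact abs_lt.1 hx.2
  -- summability facts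
  have hsumm1 : Summable (fun j : ℕ => (j : ℝ) * (1/2 : ℝ) ^ j) := by
    simpa using summable_pow_mul_geometric_of_norm_lt_one (R := ℝ) 1 (r := (1/2 : ℝ)) (by norm_num)
  have hsumm2 : Summable (fun j : ℕ => ((1:ℝ)/2) ^ j) :=
    summable_geometric_of_lt_one (by norm_num) (by norm_num)
  have hsumm : Summable (fun j : ℕ => ((j : ℝ) + 1) * (1/2 : ℝ) ^ j) := by
    have := hsumm1.add hsumm2
    simpa [add_mul] using this
  have hS : ∑' j : ℕ, (((j : ℝ) + 1) * (1/2 : ℝ) ^ j) = 4 := by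
    have h1 : ∑' j : ℕ, ((j : ℝ) * (1/2 : ℝ) ^ j) = 2 := by
      rw [tsum_coe_mul_geometric_of_norm_lt_one (by norm_num [Real.norm_eq_abs])]
      norm_num
    have h2 : ∑' j : ℕ, ((1:ℝ)/2) ^ j = 2 := by
      rw [tsum_geometric_of_lt_one (by norm_num) (by norm_num)]; norm_num
    calc ∑' j : ℕ, (((j : ℝ) + 1) * (1/2 : ℝ) ^ j)
        = ∑' j : ℕ, ((j : ℝ) * (1/2 : ℝ) ^ j + ((1:ℝ)/2) ^ j) := by
            congr 1; funext j; ring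
      _ = 2 + 2 := by rw [Summable.tsum_add hsumm1 hsumm2, h1, h2]
      _ = 4 := by norm_num
  -- sum bound
  have hsum : (∑' j : ℕ, ENNReal.ofReal (((j : ℝ) + 1) * Real.log 2 + L)
        * ENNReal.ofReal (2 * c * (ε / 2 ^ j)))
      ≤ ENNReal.ofReal (8 * c * ε * (1 + L)) := by
    have hlog2 : Real.log 2 ≤ 1 := by
      have := Real.log_le_sub_one_of_pos (by norm_num : (0:ℝ) < 2); linarith
    have hterm : ∀ j : ℕ, ENNReal.ofReal (((j : ℝ) + 1) * Real.log 2 + L)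
        * ENNReal.ofReal (2 * c * (ε / 2 ^ j))
        ≤ ENNReal.ofReal ((2 * c * ε * (1 + L)) * (((j : ℝ) + 1) * (1/2 : ℝ) ^ j)) := by
      intro j
      have hj0 : (0:ℝ) ≤ (j : ℝ) := Nat.cast_nonneg j
      have hBnn : 0 ≤ ((j : ℝ) + 1) * Real.log 2 + L := by
        have : (0:ℝ) ≤ Real.log 2 := Real.log_nonneg (by norm_num)
        positivity
      rw [← ENNReal.ofReal_mul hBnn]
      apply ENNReal.ofReal_le_ofReal
      have hB : ((j : ℝ) + 1) * Real.log 2 + L ≤ ((j : ℝ) + 1) * (1 + L) := by nlinarith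
      have h2 : (0:ℝ) ≤ 2 * c * (ε / 2 ^ j) := by positivity
      calc (((j : ℝ) + 1) * Real.log 2 + L) * (2 * c * (ε / 2 ^ j))
          ≤ (((j : ℝ) + 1) * (1 + L)) * (2 * c * (ε / 2 ^ j)) :=
            mul_le_mul_of_nonneg_right hB h2
        _ = (2 * c * ε * (1 + L)) * (((j : ℝ) + 1) * (1/2 : ℝ) ^ j) := by
            rw [div_pow, one_pow]
            field_simp
    refine le_trans (ENNReal.tsum_le_tsum hterm) ?_
    rw [← ENNReal.ofReal_tsum_of_nonneg (fun j => by positivity) (hsumm.mul_left _)]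
    apply ENNReal.ofReal_le_ofReal
    rw [tsum_mul_left, hS]
    nlinarith
  -- assemble
  calc ∫⁻ x in Set.Ioo (-ε) ε, ENNReal.ofReal |Real.log (abs x)| ∂ν
      ≤ ∫⁻ x in (⋃ j, A j) ∪ {0}, ENNReal.ofReal |Real.log (abs x)| ∂ν :=
        lintegral_mono_set hcover
    _ ≤ (∫⁻ x in ⋃ j, A j, ENNReal.ofReal |Real.log (abs x)| ∂ν)
        + ∫⁻ x in ({0} : Set ℝ), ENNReal.ofReal |Real.log (abs x)| ∂ν :=
        lintegral_union_le _ _ _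
    _ = ∫⁻ x in ⋃ j, A j, ENNReal.ofReal |Real.log (abs x)| ∂ν := by
        rw [Measure.restrict_eq_zero.2 hν0, lintegral_zero_measure, add_zero]
    _ ≤ ∑' j, ∫⁻ x in A j, ENNReal.ofReal |Real.log (abs x)| ∂ν :=
        lintegral_iUnion_le _ _
    _ ≤ ∑' j : ℕ, ENNReal.ofReal (((j : ℝ) + 1) * Real.log 2 + L)
        * ENNReal.ofReal (2 * c * (ε / 2 ^ j)) := ENNReal.tsum_le_tsum hann
    _ ≤ ENNReal.ofReal (8 * c * ε * (1 + L)) := hsum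


/-- If the Stieltjes transform of a probability measure `ν` on `ℝ` satisfies
`|Im G_ν(iy)| ≤ c` for all `y ∈ (0,1]`, then for every `ε ∈ (0,1]`,
`∫_{(-ε,ε)} |log|x|| dν ≤ C·ε·(1+|log ε|)` for a constant `C` depending only
on `c`; in particular `ν({0}) = 0` and `log|x|` is `ν`-integrable near `0`. -/
theorem stmt_10 (c : ℝ) (hc : 0 ≤ c) :
    ∃ C > (0 : ℝ), ∀ (ν : Measure ℝ), IsProbabilityMeasure ν →
      (∀ y : ℝ, 0 < y → y ≤ 1 →
        abs (∫ x : ℝ, (Complex.I * y - x)⁻¹ ∂ν).im ≤ c) →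
      (∀ ε : ℝ, 0 < ε → ε ≤ 1 →
        ∫ x in Set.Ioo (-ε) ε, abs (Real.log (abs x)) ∂ν ≤ C * ε * (1 + |Real.log ε|)) ∧
      ν {0} = 0 ∧
      IntegrableOn (fun x => Real.log (abs x)) (Set.Ioo (-1) 1) ν := by
  refine ⟨8 * c + 1, by linarith, fun ν hprob hG => ?_⟩
  haveI := hprob
  have hν : ∀ y : ℝ, 0 < y → y ≤ 1 → ν (Set.Ioo (-y) y) ≤ ENNReal.ofReal (2 * c * y) :=
    fun y h1 h2 => my_lemA c y ν h1 h2 (hG y h1 h2)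
  have hν0 : ν {0} = 0 := my_lem0 c ν hν
  have hmeas : Measurable fun x : ℝ => |Real.log (abs x)| :=
    (Real.measurable_log.comp continuous_abs.measurable).abs
  refine ⟨fun ε hε hε1 => ?_, hν0, ?_⟩
  · have hlin := my_lemB c hc ν hν hε hε1
    have heq : ∫ x in Set.Ioo (-ε) ε, |Real.log (abs x)| ∂ν
        = (∫⁻ x in Set.Ioo (-ε) ε, ENNReal.ofReal |Real.log (abs x)| ∂ν).toReal :=
      integral_eq_lintegral_of_nonneg_ae (Filter.Eventually.of_forall fun x => abs_nonneg _)
        hmeas.aestronglyMeasurable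
    rw [heq]
    refine le_trans (ENNReal.toReal_le_of_le_ofReal (by positivity) hlin) ?_
    have h1 : 0 ≤ ε * (1 + |Real.log ε|) := by positivity
    nlinarith
  · refine ⟨(Real.measurable_log.comp continuous_abs.measurable).aestronglyMeasurable, ?_⟩
    rw [hasFiniteIntegral_iff_norm]
    simp only [Real.norm_eq_abs]
    exact lt_of_le_of_lt (my_lemB c hc ν hν one_pos le_rfl) ENNReal.ofReal_lt_top
end
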